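/- For d ≥ 5 and β ≥ β_t(a,b,d) := (a (4π)^{-d/2} (b/(a-b)) ζ(d/2 - 1))^{2/(d-2)}, one has μ_t(β) = μ_c(β) := a (4πβ)^{-d/2} ζ(d/2); equivalently, the infimum inf_{s<0}{a ∂p_0/∂α(β,s) - ((a-b)/b)s} is attained in the limit s ↑ 0 if and only if a ∂²p_0/∂α²(β,0) ≤ (a-b)/b. -/

import Mathlib

open Real Set

set_option maxHeartbeats 1000000

lemma my_summable_pow {p : ℝ} (hp : p < -1) : Summable (fun k : ℕ => ((k:ℝ)+1) ^ p) := by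
  have h := (Real.summable_nat_rpow (p := p)).2 hp
  have h2 := (_root_.summable_nat_add_iff (f := fun n : ℕ => (n:ℝ) ^ p) 1).2 h
  refine h2.congr fun n => ?_
  push_cast
  ring_nf

lemma my_exp_sub_one_le (x : ℝ) : Real.exp x - 1 ≤ x * Real.exp x := by
  have h := Real.add_one_le_exp (-x)
  have hp := Real.exp_pos x
  rw [Real.exp_neg] at h
  have h2 := mul_le_mul_of_nonneg_right h hp.le
  rw [inv_mul_cancel₀ hp.ne'] at h2
  nlinarith

/-- For `d ≥ 5` and `β ≥ β_t(a,b,d) = (a (4π)^{-d/2} (b/(a-b)) ζ(d/2-1))^{2/(d-2)}`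
one has `μ_t(β) = μ_c(β) = a (4πβ)^{-d/2} ζ(d/2)`; equivalently the infimum defining
`μ_t` is attained in the limit `s ↑ 0` iff `a ∂²p₀/∂α²(β,0) ≤ (a-b)/b`, where
`∂²p₀/∂α²(β,0) = β (4πβ)^{-d/2} ζ(d/2 - 1)`. -/
theorem stmt_16 (d : ℕ) (hd : 5 ≤ d) (β a b : ℝ) (hβ : 0 < β) (hb : 0 < b) (hab : b < a)
    (p₀' : ℝ → ℝ)
    (hp₀' : p₀' = fun s =>
      (4 * π * β) ^ (-(d : ℝ) / 2) *
        ∑' k : ℕ, ((k : ℝ) + 1) ^ (-(d : ℝ) / 2) * Real.exp (β * s * ((k : ℝ) + 1)))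
    (μt μc βt : ℝ)
    (hμt : μt = sInf {v : ℝ | ∃ s < (0 : ℝ), v = a * p₀' s - (a - b) / b * s})
    (hμc : μc = a * (4 * π * β) ^ (-(d : ℝ) / 2) * ∑' k : ℕ, ((k : ℝ) + 1) ^ (-(d : ℝ) / 2))
    (hβt : βt = (a * (4 * π) ^ (-(d : ℝ) / 2) * (b / (a - b)) *
      ∑' k : ℕ, ((k : ℝ) + 1) ^ (-((d : ℝ) / 2 - 1))) ^ (2 / ((d : ℝ) - 2))) :
    (βt ≤ β → μt = μc) ∧
    (μt = μc ↔
      a * (β * (4 * π * β) ^ (-(d : ℝ) / 2) *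
        ∑' k : ℕ, ((k : ℝ) + 1) ^ (-((d : ℝ) / 2 - 1))) ≤ (a - b) / b) := by
  have hd5 : (5:ℝ) ≤ (d:ℝ) := by exact_mod_cast hd
  have hab' : 0 < a - b := by linarith
  have ha : 0 < a := lt_trans hb hab
  have hT : 0 < (a-b)/b := div_pos hab' hb
  have hCpos : 0 < (4*π*β) ^ (-(d:ℝ)/2) := Real.rpow_pos_of_pos (by positivity) _
  have hk1 : ∀ k : ℕ, (0:ℝ) < (k:ℝ)+1 := fun k => by positivity
  have hS0 : Summable (fun k : ℕ => ((k:ℝ)+1) ^ (-(d:ℝ)/2)) := my_summable_pow (by linarith)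
  have hS1 : Summable (fun k : ℕ => ((k:ℝ)+1) ^ (-((d:ℝ)/2 - 1))) := my_summable_pow (by linarith)
  have hpow : ∀ k : ℕ, ((k:ℝ)+1) ^ (-(d:ℝ)/2) * ((k:ℝ)+1) = ((k:ℝ)+1) ^ (-((d:ℝ)/2 - 1)) := by
    intro k
    have h := (Real.rpow_add (hk1 k) (-(d:ℝ)/2) 1).symm
    rw [Real.rpow_one] at h
    rw [h]
    congr 1
    ring
  have hxle : ∀ s : ℝ, s ≤ 0 → ∀ k : ℕ, β * s * ((k:ℝ)+1) ≤ 0 := by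
    intro s hs k
    have h1 : β * s ≤ 0 := mul_nonpos_iff.2 (Or.inl ⟨hβ.le, hs⟩)
    exact mul_nonpos_iff.2 (Or.inr ⟨h1, (hk1 k).le⟩)
  have hE1 : ∀ s : ℝ, s ≤ 0 → ∀ k : ℕ, Real.exp (β * s * ((k:ℝ)+1)) ≤ 1 := by
    intro s hs k
    exact Real.exp_le_one_iff.2 (hxle s hs k)
  have hSe : ∀ s : ℝ, s ≤ 0 →
      Summable (fun k : ℕ => ((k:ℝ)+1) ^ (-(d:ℝ)/2) * Real.exp (β * s * ((k:ℝ)+1))) := by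
    intro s hs
    refine hS0.of_nonneg_of_le (fun k => by positivity) (fun k => ?_)
    have h2 := mul_le_mul_of_nonneg_left (hE1 s hs k)
      (Real.rpow_pos_of_pos (hk1 k) (-(d:ℝ)/2)).le
    simpa using h2
  have hSe1 : ∀ s : ℝ, s ≤ 0 →
      Summable (fun k : ℕ => ((k:ℝ)+1) ^ (-((d:ℝ)/2-1)) * Real.exp (β * s * ((k:ℝ)+1))) := by
    intro s hs
    refine hS1.of_nonneg_of_le (fun k => by positivity) (fun k => ?_)
    have h2 := mul_le_mul_of_nonneg_left (hE1 s hs k)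
      (Real.rpow_pos_of_pos (hk1 k) (-((d:ℝ)/2-1))).le
    simpa using h2
  -- notation
  set C := (4*π*β) ^ (-(d:ℝ)/2) with hC_def
  set Z0 := ∑' k : ℕ, ((k:ℝ)+1) ^ (-(d:ℝ)/2) with hZ0_def
  set Z1 := ∑' k : ℕ, ((k:ℝ)+1) ^ (-((d:ℝ)/2-1)) with hZ1_def
  clear_value C Z0 Z1
  have haC : 0 < a * C := mul_pos ha hCpos
  have hZ1pos : 0 < Z1 := by
    rw [hZ1_def]
    exact Summable.tsum_pos hS1 (fun k => (Real.rpow_pos_of_pos (hk1 k) _).le) 0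
      (Real.rpow_pos_of_pos (hk1 0) _)
  have hGdef : ∀ s : ℝ, s ≤ 0 →
      (∑' k : ℕ, ((k:ℝ)+1) ^ (-(d:ℝ)/2) * Real.exp (β * s * ((k:ℝ)+1))) - Z0
        = ∑' k : ℕ, (((k:ℝ)+1) ^ (-(d:ℝ)/2) * Real.exp (β * s * ((k:ℝ)+1))
            - ((k:ℝ)+1) ^ (-(d:ℝ)/2)) := by
    intro s hs
    rw [hZ0_def]
    exact (Summable.tsum_sub (hSe s hs) hS0).symm
  have hF : ∀ s : ℝ, s ≤ 0 → a * p₀' s - (a-b)/b * s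
      = (a * C * Z0 + a * C * (∑' k : ℕ, (((k:ℝ)+1) ^ (-(d:ℝ)/2) * Real.exp (β * s * ((k:ℝ)+1))
          - ((k:ℝ)+1) ^ (-(d:ℝ)/2)))) - (a-b)/b * s := by
    intro s hs
    simp only [hp₀']
    rw [← hGdef s hs]
    ring
  have hub : ∀ s : ℝ, s ≤ 0 → a * p₀' s - (a-b)/b * s ≤ μc - (a-b)/b * s := by
    intro s hs
    rw [hF s hs, hμc]
    have hG : (∑' k : ℕ, (((k:ℝ)+1) ^ (-(d:ℝ)/2) * Real.exp (β * s * ((k:ℝ)+1))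
        - ((k:ℝ)+1) ^ (-(d:ℝ)/2))) ≤ 0 := by
      apply tsum_nonpos
      intro k
      have hw := (Real.rpow_pos_of_pos (hk1 k) (-(d:ℝ)/2)).le
      nlinarith [hE1 s hs k]
    nlinarith [mul_le_mul_of_nonneg_left hG haC.le]
  have hnn : ∀ s : ℝ, s < 0 → 0 ≤ a * p₀' s - (a-b)/b * s := by
    intro s hs
    simp only [hp₀']
    have h1 : 0 ≤ ∑' k : ℕ, ((k:ℝ)+1) ^ (-(d:ℝ)/2) * Real.exp (β * s * ((k:ℝ)+1)) :=
      tsum_nonneg (fun k => by positivity)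
    have h2 : 0 < -((a-b)/b * s) := by
      have := mul_pos hT (neg_pos.2 hs)
      nlinarith
    nlinarith [mul_nonneg (mul_nonneg ha.le hCpos.le) h1]
  have hBdd : BddBelow {v : ℝ | ∃ s < (0 : ℝ), v = a * p₀' s - (a - b) / b * s} := by
    refine ⟨0, fun v hv => ?_⟩
    obtain ⟨s, hs, rfl⟩ := hv
    exact hnn s hs
  have hne : Set.Nonempty {v : ℝ | ∃ s < (0 : ℝ), v = a * p₀' s - (a - b) / b * s} :=
    ⟨_, ⟨-1, by norm_num, rfl⟩⟩
  -- K ≤ T implies μt = μc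
  have main1 : a * (β * C * Z1) ≤ (a-b)/b → μt = μc := by
    intro hK
    have hlb : ∀ s : ℝ, s < 0 → μc ≤ a * p₀' s - (a-b)/b * s := by
      intro s hs
      rw [hF s hs.le, hμc]
      have hG : β * s * Z1 ≤ ∑' k : ℕ, (((k:ℝ)+1) ^ (-(d:ℝ)/2) * Real.exp (β * s * ((k:ℝ)+1))
          - ((k:ℝ)+1) ^ (-(d:ℝ)/2)) := by
        rw [hZ1_def, ← tsum_mul_left]
        apply Summable.tsum_le_tsum _ (hS1.mul_left _) ((hSe s hs.le).sub hS0)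
        intro k
        have hw := (Real.rpow_pos_of_pos (hk1 k) (-(d:ℝ)/2)).le
        have hx := Real.add_one_le_exp (β * s * ((k:ℝ)+1))
        have h3 : ((k:ℝ)+1) ^ (-(d:ℝ)/2) * (β * s * ((k:ℝ)+1))
            ≤ ((k:ℝ)+1) ^ (-(d:ℝ)/2) * (Real.exp (β * s * ((k:ℝ)+1)) - 1) := by
          apply mul_le_mul_of_nonneg_left _ hw
          linarith
        calc β * s * ((k:ℝ)+1) ^ (-((d:ℝ)/2-1))
            = ((k:ℝ)+1) ^ (-(d:ℝ)/2) * (β * s * ((k:ℝ)+1)) := by rw [← hpow k]; ring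
          _ ≤ ((k:ℝ)+1) ^ (-(d:ℝ)/2) * (Real.exp (β * s * ((k:ℝ)+1)) - 1) := h3
          _ = ((k:ℝ)+1) ^ (-(d:ℝ)/2) * Real.exp (β * s * ((k:ℝ)+1))
              - ((k:ℝ)+1) ^ (-(d:ℝ)/2) := by ring
      have h4 := mul_le_mul_of_nonneg_left hG haC.le
      nlinarith [mul_nonneg (neg_nonneg.2 hs.le) (sub_nonneg.2 hK)]
    rw [hμt]
    apply le_antisymm
    · have key : ∀ ε : ℝ, 0 < ε →
          sInf {v : ℝ | ∃ s < (0 : ℝ), v = a * p₀' s - (a - b) / b * s} - ε ≤ μc := by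
        intro ε hε
        set s : ℝ := -(ε / (2 * ((a-b)/b))) with hs_def
        have h2T : 0 < 2 * ((a-b)/b) := by linarith
        have hs : s < 0 := by
          rw [hs_def]
          have : 0 < ε / (2 * ((a-b)/b)) := div_pos hε h2T
          linarith
        have h5 : sInf {v : ℝ | ∃ s < (0 : ℝ), v = a * p₀' s - (a - b) / b * s}
            ≤ a * p₀' s - (a-b)/b * s := csInf_le hBdd ⟨s, hs, rfl⟩
        have h6 := hub s hs.le
        have h7 : (a-b)/b * s = -(ε/2) := by
          rw [hs_def]
          field_simp
        linarith
      exact le_of_forall_sub_le key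
    · exact le_csInf hne (fun v hv => by obtain ⟨s, hs, rfl⟩ := hv; exact hlb s hs)
  -- T < K implies μt < μc
  have main2 : (a-b)/b < a * (β * C * Z1) → μt < μc := by
    intro hK
    have haCβ : 0 < a * C * β := mul_pos haC hβ
    set L : ℝ := ((a-b)/b) / (a * C * β) with hL_def
    clear_value L
    have hLpos : 0 < L := by rw [hL_def]; exact div_pos hT haCβ
    have hLZ : L < Z1 := by
      rw [hL_def, div_lt_iff₀ haCβ]
      nlinarith
    have htend := hS1.hasSum.tendsto_sum_nat
    rw [← hZ1_def] at htend
    obtain ⟨N, hN⟩ := (htend.eventually_const_lt hLZ).exists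
    set P : ℝ := ∑ i ∈ Finset.range N, ((i:ℝ)+1) ^ (-((d:ℝ)/2-1)) with hP_def
    have hPpos : 0 < P := lt_trans hLpos hN
    clear_value P
    set r : ℝ := (L/P + 1)/2 with hr_def
    clear_value r
    have hr0 : 0 < r := by
      have h0 : 0 < L/P := div_pos hLpos hPpos
      rw [hr_def]; linarith
    have hr1 : r < 1 := by
      rw [hr_def]
      have : L/P < 1 := (div_lt_one hPpos).2 hN
      linarith
    have hrP : L < r * P := by
      rw [hr_def]
      have h2 : (L/P + 1)/2 * P = (L + P)/2 := by
        field_simp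
      linarith only [h2, hN]
    have hNne : (0:ℝ) < (N:ℝ) := by
      rcases Nat.eq_zero_or_pos N with h | h
      · exfalso
        rw [hP_def, h] at hPpos
        simp at hPpos
      · exact_mod_cast h
    set s : ℝ := Real.log r / (β * N) with hs_def
    clear_value s
    have hs : s < 0 := by
      rw [hs_def]
      exact div_neg_of_neg_of_pos (Real.log_neg hr0 hr1) (by positivity)
    have hexp : Real.exp (β * s * N) = r := by
      rw [hs_def]
      rw [show β * (Real.log r / (β * N)) * N = Real.log r by field_simp]
      exact Real.exp_log hr0
    have hH : r * P ≤ ∑' k : ℕ, ((k:ℝ)+1) ^ (-((d:ℝ)/2-1)) * Real.exp (β * s * ((k:ℝ)+1)) := by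
      have h1 : ∑ i ∈ Finset.range N, ((i:ℝ)+1) ^ (-((d:ℝ)/2-1)) * Real.exp (β * s * ((i:ℝ)+1))
          ≤ ∑' k : ℕ, ((k:ℝ)+1) ^ (-((d:ℝ)/2-1)) * Real.exp (β * s * ((k:ℝ)+1)) :=
        Summable.sum_le_tsum _ (fun k _ => by positivity) (hSe1 s hs.le)
      have h2 : r * P ≤ ∑ i ∈ Finset.range N, ((i:ℝ)+1) ^ (-((d:ℝ)/2-1))
          * Real.exp (β * s * ((i:ℝ)+1)) := by
        rw [hP_def, Finset.mul_sum]
        apply Finset.sum_le_sum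
        intro i hi
        have hiN : (i:ℝ) + 1 ≤ (N:ℝ) := by
          have := Finset.mem_range.1 hi
          exact_mod_cast Nat.succ_le_of_lt this
        have hβs : β * s ≤ 0 := mul_nonpos_iff.2 (Or.inl ⟨hβ.le, hs.le⟩)
        have hxge : β * s * (N:ℝ) ≤ β * s * ((i:ℝ)+1) := by nlinarith
        have h3 := Real.exp_le_exp.2 hxge
        rw [hexp] at h3
        have hw := (Real.rpow_pos_of_pos (hk1 i) (-((d:ℝ)/2-1))).le
        calc r * ((i:ℝ)+1) ^ (-((d:ℝ)/2-1)) = ((i:ℝ)+1) ^ (-((d:ℝ)/2-1)) * r := by ring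
          _ ≤ ((i:ℝ)+1) ^ (-((d:ℝ)/2-1)) * Real.exp (β * s * ((i:ℝ)+1)) :=
            mul_le_mul_of_nonneg_left h3 hw
      linarith
    have hβs : β * s < 0 := mul_neg_of_pos_of_neg hβ hs
    have hG : (∑' k : ℕ, (((k:ℝ)+1) ^ (-(d:ℝ)/2) * Real.exp (β * s * ((k:ℝ)+1))
        - ((k:ℝ)+1) ^ (-(d:ℝ)/2)))
        ≤ β * s * (r * P) := by
      have step1 : (∑' k : ℕ, (((k:ℝ)+1) ^ (-(d:ℝ)/2) * Real.exp (β * s * ((k:ℝ)+1))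
          - ((k:ℝ)+1) ^ (-(d:ℝ)/2)))
          ≤ β * s * ∑' k : ℕ, ((k:ℝ)+1) ^ (-((d:ℝ)/2-1)) * Real.exp (β * s * ((k:ℝ)+1)) := by
        rw [← tsum_mul_left]
        apply Summable.tsum_le_tsum _ ((hSe s hs.le).sub hS0) ((hSe1 s hs.le).mul_left _)
        intro k
        have hw := (Real.rpow_pos_of_pos (hk1 k) (-(d:ℝ)/2)).le
        have hx := my_exp_sub_one_le (β * s * ((k:ℝ)+1))
        have h3 : ((k:ℝ)+1) ^ (-(d:ℝ)/2) * (Real.exp (β * s * ((k:ℝ)+1)) - 1)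
            ≤ ((k:ℝ)+1) ^ (-(d:ℝ)/2) * (β * s * ((k:ℝ)+1) * Real.exp (β * s * ((k:ℝ)+1))) :=
          mul_le_mul_of_nonneg_left hx hw
        calc ((k:ℝ)+1) ^ (-(d:ℝ)/2) * Real.exp (β * s * ((k:ℝ)+1)) - ((k:ℝ)+1) ^ (-(d:ℝ)/2)
            = ((k:ℝ)+1) ^ (-(d:ℝ)/2) * (Real.exp (β * s * ((k:ℝ)+1)) - 1) := by ring
          _ ≤ ((k:ℝ)+1) ^ (-(d:ℝ)/2) * (β * s * ((k:ℝ)+1) * Real.exp (β * s * ((k:ℝ)+1))) := h3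
          _ = β * s * ((((k:ℝ)+1) ^ (-(d:ℝ)/2) * ((k:ℝ)+1)) * Real.exp (β * s * ((k:ℝ)+1))) := by
              ring
          _ = β * s * (((k:ℝ)+1) ^ (-((d:ℝ)/2-1)) * Real.exp (β * s * ((k:ℝ)+1))) := by
              rw [hpow k]
      have step2 := mul_le_mul_of_nonpos_left hH hβs.le
      linarith
    have hFs : a * p₀' s - (a-b)/b * s < μc := by
      rw [hF s hs.le, hμc]
      have h4 := mul_le_mul_of_nonneg_left hG haC.le
      have h6 : (a-b)/b < a * C * β * (r * P) := by
        have h5 := mul_lt_mul_of_pos_left hrP haCβ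
        rw [hL_def, mul_div_cancel₀ _ haCβ.ne'] at h5
        linarith
      nlinarith [mul_neg_of_neg_of_pos hs (sub_pos.2 h6)]
    have h7 : μt ≤ a * p₀' s - (a-b)/b * s := by
      rw [hμt]; exact csInf_le hBdd ⟨s, hs, rfl⟩
    linarith
  have iff2 : μt = μc ↔ a * (β * C * Z1) ≤ (a-b)/b := by
    constructor
    · intro h
      by_contra hc
      push_neg at hc
      exact absurd h (ne_of_lt (main2 hc))
    · exact main1
  refine ⟨?_, iff2⟩
  intro hβle
  apply main1
  have hQpos : 0 < (4*π) ^ (-(d:ℝ)/2) := Real.rpow_pos_of_pos (by positivity) _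
  have hApos : 0 < a * (4*π) ^ (-(d:ℝ)/2) * (b/(a-b)) * Z1 :=
    mul_pos (mul_pos (mul_pos ha hQpos) (div_pos hb hab')) hZ1pos
  have hd2 : (0:ℝ) < (d:ℝ) - 2 := by linarith
  set B : ℝ := β ^ (((d:ℝ)-2)/2) with hB_def
  clear_value B
  have hBpos : 0 < B := by rw [hB_def]; exact Real.rpow_pos_of_pos hβ _
  have hA2 : a * (4*π) ^ (-(d:ℝ)/2) * (b/(a-b)) * Z1 ≤ B := by
    have h1 : βt ^ (((d:ℝ)-2)/2) ≤ B := by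
      rw [hB_def]
      exact Real.rpow_le_rpow (by rw [hβt]; exact Real.rpow_nonneg hApos.le _) hβle
        (by positivity)
    rw [hβt, ← Real.rpow_mul hApos.le,
      show (2/((d:ℝ)-2)) * (((d:ℝ)-2)/2) = 1 by field_simp, Real.rpow_one] at h1
    exact h1
  have h4 : C = (4*π) ^ (-(d:ℝ)/2) * β ^ (-(d:ℝ)/2) := by
    rw [hC_def]
    exact Real.mul_rpow (by positivity) hβ.le
  have h5 : β * β ^ (-(d:ℝ)/2) = B⁻¹ := by
    have e1 : β * β ^ (-(d:ℝ)/2) = β ^ ((1:ℝ) + -(d:ℝ)/2) := by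
      rw [Real.rpow_add hβ, Real.rpow_one]
    rw [e1, show (1:ℝ) + -(d:ℝ)/2 = -(((d:ℝ)-2)/2) by ring, Real.rpow_neg hβ.le, hB_def]
  have hKalt : a * (β * C * Z1) = (a * (4*π) ^ (-(d:ℝ)/2) * Z1) * B⁻¹ := by
    rw [h4, show a * (β * ((4*π) ^ (-(d:ℝ)/2) * β ^ (-(d:ℝ)/2)) * Z1)
      = (a * (4*π) ^ (-(d:ℝ)/2) * Z1) * (β * β ^ (-(d:ℝ)/2)) by ring, h5]
  rw [hKalt, (div_eq_mul_inv (a * (4*π) ^ (-(d:ℝ)/2) * Z1) B).symm, div_le_iff₀ hBpos]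
  have h6 := mul_le_mul_of_nonneg_left hA2 hT.le
  have h7 : (a-b)/b * (a * (4*π) ^ (-(d:ℝ)/2) * (b/(a-b)) * Z1)
      = a * (4*π) ^ (-(d:ℝ)/2) * Z1 := by
    field_simp
  linarith
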